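/- There exists an absolute constant c > 0 such that for every integer E ≥ 1, every toral eigenfunction f with frequency E and every z ∈ ℝ², there is a point x ∈ B(z, c/√E) with f(x) = 0. -/

import Mathlib

open MeasureTheory Metric

noncomputable section

/-- The set of lattice points on the circle of radius `√E`. -/
def latticeE (E : ℕ) : Finset (ℤ × ℤ) :=
  ((Finset.Icc (-(E : ℤ)) (E : ℤ)) ×ˢ (Finset.Icc (-(E : ℤ)) (E : ℤ))).filter
    (fun ξ => ξ.1 ^ 2 + ξ.2 ^ 2 = (E : ℤ))

/-- A toral eigenfunction with frequency `E`: a real-valued trigonometric polynomial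
`f(x) = ∑_{‖ξ‖² = E} a_ξ e^{2πi⟨ξ,x⟩}` with `a_{-ξ} = conj (a_ξ)` and not all
coefficients zero. -/
def IsToralEigenfunction (E : ℕ) (f : EuclideanSpace ℝ (Fin 2) → ℝ) : Prop :=
  ∃ a : ℤ × ℤ → ℂ,
    (∀ ξ : ℤ × ℤ, a (-ξ) = starRingEnd ℂ (a ξ)) ∧
    (∃ ξ ∈ latticeE E, a ξ ≠ 0) ∧
    ∀ x : EuclideanSpace ℝ (Fin 2),
      (f x : ℂ) = ∑ ξ ∈ latticeE E,
        a ξ * Complex.exp (2 * Real.pi * Complex.I *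
          ((ξ.1 : ℂ) * (x 0 : ℂ) + (ξ.2 : ℂ) * (x 1 : ℂ)))

namespace NodalDensityAux

open Real intervalIntegral

/-! ### Taylor-type polynomial bounds for `cos` -/

lemma nonneg_of_deriv {f f' : ℝ → ℝ} (hd : ∀ x, HasDerivAt f (f' x) x)
    (h0 : f 0 = 0) (h' : ∀ x, 0 ≤ x → 0 ≤ f' x) : ∀ x, 0 ≤ x → 0 ≤ f x := by
  intro x hx
  have hmono : MonotoneOn f (Set.Ici 0) := by
    apply monotoneOn_of_deriv_nonneg (convex_Ici 0)
    · exact fun y _ => (hd y).continuousAt.continuousWithinAt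
    · exact fun y _ => (hd y).differentiableAt.differentiableWithinAt
    · intro y hy
      rw [(hd y).deriv]
      rw [interior_Ici] at hy
      exact h' y (le_of_lt hy)
  have := hmono Set.self_mem_Ici (by exact hx) hx
  rwa [h0] at this

lemma sin_ge3 : ∀ x : ℝ, 0 ≤ x → 0 ≤ Real.sin x - (x - x^3/6) := by
  apply nonneg_of_deriv (f' := fun x => Real.cos x - (1 - x^2/2))
  · intro x
    have h : HasDerivAt (fun x : ℝ => x - x^3/6) (1 - x^2/2) x := by
      have := (hasDerivAt_id x).sub ((hasDerivAt_pow 3 x).div_const 6)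
      refine this.congr_deriv ?_
      norm_num
      ring
    exact (Real.hasDerivAt_sin x).sub h
  · norm_num
  · intro x _
    have := Real.one_sub_sq_div_two_le_cos (x := x)
    linarith

lemma cos_le4 : ∀ x : ℝ, 0 ≤ x → 0 ≤ (1 - x^2/2 + x^4/24) - Real.cos x := by
  apply nonneg_of_deriv (f' := fun x => Real.sin x - (x - x^3/6))
  · intro x
    have h : HasDerivAt (fun x : ℝ => 1 - x^2/2 + x^4/24) (x^3/6 - x) x := by
      have := (((hasDerivAt_pow 2 x).div_const 2).const_sub 1).add ((hasDerivAt_pow 4 x).div_const 24)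
      refine this.congr_deriv ?_
      norm_num
      ring
    have := h.sub (Real.hasDerivAt_cos x)
    refine this.congr_deriv ?_
    ring
  · norm_num
  · exact sin_ge3

lemma sin_le5 : ∀ x : ℝ, 0 ≤ x → 0 ≤ (x - x^3/6 + x^5/120) - Real.sin x := by
  apply nonneg_of_deriv (f' := fun x => (1 - x^2/2 + x^4/24) - Real.cos x)
  · intro x
    have h : HasDerivAt (fun x : ℝ => x - x^3/6 + x^5/120) (1 - x^2/2 + x^4/24) x := by
      have := ((hasDerivAt_id x).sub ((hasDerivAt_pow 3 x).div_const 6)).add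
        ((hasDerivAt_pow 5 x).div_const 120)
      refine this.congr_deriv ?_
      norm_num
      ring
    exact h.sub (Real.hasDerivAt_sin x)
  · norm_num
  · exact cos_le4

lemma cos_ge6 : ∀ x : ℝ, 0 ≤ x → 0 ≤ Real.cos x - (1 - x^2/2 + x^4/24 - x^6/720) := by
  apply nonneg_of_deriv (f' := fun x => (x - x^3/6 + x^5/120) - Real.sin x)
  · intro x
    have h : HasDerivAt (fun x : ℝ => 1 - x^2/2 + x^4/24 - x^6/720) (-x + x^3/6 - x^5/120) x := by
      have := ((((hasDerivAt_pow 2 x).div_const 2).const_sub 1).add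
        ((hasDerivAt_pow 4 x).div_const 24)).sub ((hasDerivAt_pow 6 x).div_const 720)
      refine this.congr_deriv ?_
      norm_num
      ring
    have := (Real.hasDerivAt_cos x).sub h
    refine this.congr_deriv ?_
    ring
  · norm_num
  · exact sin_le5

lemma sin_ge7 : ∀ x : ℝ, 0 ≤ x → 0 ≤ Real.sin x - (x - x^3/6 + x^5/120 - x^7/5040) := by
  apply nonneg_of_deriv (f' := fun x => Real.cos x - (1 - x^2/2 + x^4/24 - x^6/720))
  · intro x
    have h : HasDerivAt (fun x : ℝ => x - x^3/6 + x^5/120 - x^7/5040)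
        (1 - x^2/2 + x^4/24 - x^6/720) x := by
      have := (((hasDerivAt_id x).sub ((hasDerivAt_pow 3 x).div_const 6)).add
        ((hasDerivAt_pow 5 x).div_const 120)).sub ((hasDerivAt_pow 7 x).div_const 5040)
      refine this.congr_deriv ?_
      norm_num
      ring
    exact (Real.hasDerivAt_sin x).sub h
  · norm_num
  · exact cos_ge6

lemma cos_le8 (x : ℝ) : Real.cos x ≤ 1 - x^2/2 + x^4/24 - x^6/720 + x^8/40320 := by
  have key : ∀ y : ℝ, 0 ≤ y → 0 ≤ (1 - y^2/2 + y^4/24 - y^6/720 + y^8/40320) - Real.cos y := by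
    apply nonneg_of_deriv (f' := fun x => Real.sin x - (x - x^3/6 + x^5/120 - x^7/5040))
    · intro x
      have h : HasDerivAt (fun x : ℝ => 1 - x^2/2 + x^4/24 - x^6/720 + x^8/40320)
          (-(x) + x^3/6 - x^5/120 + x^7/5040) x := by
        have := (((((hasDerivAt_pow 2 x).div_const 2).const_sub 1).add
          ((hasDerivAt_pow 4 x).div_const 24)).sub ((hasDerivAt_pow 6 x).div_const 720)).add
          ((hasDerivAt_pow 8 x).div_const 40320)
        refine this.congr_deriv ?_
        norm_num
        ring
      have := h.sub (Real.hasDerivAt_cos x)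
      refine this.congr_deriv ?_
      ring
    · norm_num
    · exact sin_ge7
  rcases le_or_gt 0 x with hx | hx
  · linarith [key x hx]
  · have := key (-x) (by linarith)
    rw [Real.cos_neg] at this
    nlinarith [this]

/-! ### Wallis-type moments and negativity of the Bessel integral -/

lemma I2 : ∫ θ in (0:ℝ)..(2*π), Real.cos θ^2 = π := by
  rw [integral_cos_sq]
  simp [Real.sin_two_pi]

lemma I4 : ∫ θ in (0:ℝ)..(2*π), Real.cos θ^4 = 3*π/4 := by
  have := integral_cos_pow (a := 0) (b := 2*π) 2
  norm_num [Real.sin_two_pi, I2] at this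
  linarith

lemma I6 : ∫ θ in (0:ℝ)..(2*π), Real.cos θ^6 = 5*π/8 := by
  have := integral_cos_pow (a := 0) (b := 2*π) 4
  norm_num [Real.sin_two_pi, I4] at this
  linarith

lemma I8 : ∫ θ in (0:ℝ)..(2*π), Real.cos θ^8 = 35*π/64 := by
  have := integral_cos_pow (a := 0) (b := 2*π) 6
  norm_num [Real.sin_two_pi, I6] at this
  linarith

lemma Kneg : (∫ θ in (0:ℝ)..(2*π), Real.cos (3*Real.cos θ)) < 0 := by
  have hle : (∫ θ in (0:ℝ)..(2*π), Real.cos (3*Real.cos θ)) ≤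
      ∫ θ in (0:ℝ)..(2*π), (1 - 9/2*Real.cos θ^2 + 27/8*Real.cos θ^4
        - 81/80*Real.cos θ^6 + 729/4480*Real.cos θ^8) := by
    apply intervalIntegral.integral_mono_on (by positivity)
    · exact (Real.continuous_cos.comp (by fun_prop)).intervalIntegrable _ _
    · exact (by fun_prop : Continuous fun θ:ℝ => 1 - 9/2*Real.cos θ^2 + 27/8*Real.cos θ^4
        - 81/80*Real.cos θ^6 + 729/4480*Real.cos θ^8).intervalIntegrable _ _
    · intro θ _
      have := cos_le8 (3*Real.cos θ)
      calc Real.cos (3*Real.cos θ) ≤ 1 - (3*Real.cos θ)^2/2 + (3*Real.cos θ)^4/24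
            - (3*Real.cos θ)^6/720 + (3*Real.cos θ)^8/40320 := this
        _ = 1 - 9/2*Real.cos θ^2 + 27/8*Real.cos θ^4
            - 81/80*Real.cos θ^6 + 729/4480*Real.cos θ^8 := by ring
  have hval : (∫ θ in (0:ℝ)..(2*π), (1 - 9/2*Real.cos θ^2 + 27/8*Real.cos θ^4
      - 81/80*Real.cos θ^6 + 729/4480*Real.cos θ^8))
      = 2*π - 9/2*π + 27/8*(3*π/4) - 81/80*(5*π/8) + 729/4480*(35*π/64) := by
    have c2 : IntervalIntegrable (fun θ:ℝ => 9/2*Real.cos θ^2) volume 0 (2*π) :=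
      (by fun_prop : Continuous fun θ:ℝ => 9/2*Real.cos θ^2).intervalIntegrable _ _
    have c4 : IntervalIntegrable (fun θ:ℝ => 27/8*Real.cos θ^4) volume 0 (2*π) :=
      (by fun_prop : Continuous fun θ:ℝ => 27/8*Real.cos θ^4).intervalIntegrable _ _
    have c6 : IntervalIntegrable (fun θ:ℝ => 81/80*Real.cos θ^6) volume 0 (2*π) :=
      (by fun_prop : Continuous fun θ:ℝ => 81/80*Real.cos θ^6).intervalIntegrable _ _
    have c8 : IntervalIntegrable (fun θ:ℝ => 729/4480*Real.cos θ^8) volume 0 (2*π) :=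
      (by fun_prop : Continuous fun θ:ℝ => 729/4480*Real.cos θ^8).intervalIntegrable _ _
    have c1 : IntervalIntegrable (fun _:ℝ => (1:ℝ)) volume 0 (2*π) :=
      intervalIntegrable_const
    rw [integral_add (((c1.sub c2).add c4).sub c6) c8,
        integral_sub ((c1.sub c2).add c4) c6,
        integral_add (c1.sub c2) c4, integral_sub c1 c2,
        intervalIntegral.integral_const_mul, intervalIntegral.integral_const_mul, intervalIntegral.integral_const_mul, intervalIntegral.integral_const_mul,
        I2, I4, I6, I8]
    simp
  rw [hval] at hle
  nlinarith [Real.pi_pos, hle]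

/-! ### The oscillatory integral over the circle -/

lemma exp_cos_shift (φ : ℝ) :
    (∫ θ in (0:ℝ)..(2*π), Complex.exp ((3*Real.cos (θ - φ) : ℝ) * Complex.I))
      = ∫ θ in (0:ℝ)..(2*π), Complex.exp ((3*Real.cos θ : ℝ) * Complex.I) := by
  have hper : Function.Periodic (fun t : ℝ => Complex.exp ((3*Real.cos t : ℝ) * Complex.I)) (2*π) := by
    intro t
    simp [Real.cos_add_two_pi]
  rw [intervalIntegral.integral_comp_sub_right (fun t => Complex.exp ((3*Real.cos t : ℝ) * Complex.I)) φ,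
    show (0:ℝ) - φ = -φ by ring, show 2*π - φ = -φ + 2*π by ring]
  simpa using hper.intervalIntegral_add_eq (-φ) 0

lemma key_integral (E : ℕ) (hE : 1 ≤ E) (m k : ℤ) (h : m^2 + k^2 = (E:ℤ)) (r w1 w2 : ℝ)
    (hrsE : 2*π*(r*Real.sqrt E) = 3) :
    (∫ θ in (0:ℝ)..(2*π), Complex.exp (2*π*Complex.I *
        ((m:ℂ) * ((w1 + r*Real.cos θ : ℝ) : ℂ)
          + (k:ℂ) * ((w2 + r*Real.sin θ : ℝ) : ℂ))))
      = Complex.exp (2*π*Complex.I * ((m:ℂ)*(w1:ℂ) + (k:ℂ)*(w2:ℂ)))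
          * ∫ θ in (0:ℝ)..(2*π), Complex.exp ((3*Real.cos θ : ℝ) * Complex.I) := by
  have hsE : (0:ℝ) < Real.sqrt E := Real.sqrt_pos.2 (by exact_mod_cast Nat.pos_of_ne_zero (by omega))
  set sE := Real.sqrt E with hsEdef
  -- polar coordinates for (m, k)
  have hu : ((m:ℂ) + (k:ℂ)*Complex.I) ≠ 0 := by
    intro h0
    have hre : (m:ℝ) = 0 := by
      have := congrArg Complex.re h0
      simpa using this
    have him : (k:ℝ) = 0 := by
      have := congrArg Complex.im h0
      simpa using this
    have hm : m = 0 := by exact_mod_cast hre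
    have hk : k = 0 := by exact_mod_cast him
    rw [hm, hk] at h
    simp at h
    omega
  have habs : ‖((m:ℂ) + (k:ℂ)*Complex.I)‖ = sE := by
    rw [hsEdef]
    rw [show ((m:ℂ) + (k:ℂ)*Complex.I) = ((m:ℝ):ℂ) + ((k:ℝ):ℂ)*Complex.I by push_cast; ring]
    rw [Complex.norm_add_mul_I]
    congr 1
    have : ((m:ℝ)^2 + (k:ℝ)^2) = (E:ℝ) := by exact_mod_cast h
    linarith
  set φ : ℝ := Complex.arg ((m:ℂ) + (k:ℂ)*Complex.I) with hφdef
  have hcos : (m:ℝ) = sE * Real.cos φ := by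
    have := Complex.cos_arg hu
    rw [habs] at this
    have hre : ((m:ℂ) + (k:ℂ)*Complex.I).re = (m:ℝ) := by simp
    rw [hre] at this
    field_simp at this
    linarith [this]
  have hsin : (k:ℝ) = sE * Real.sin φ := by
    have := Complex.sin_arg ((m:ℂ) + (k:ℂ)*Complex.I)
    rw [habs] at this
    have him : ((m:ℂ) + (k:ℂ)*Complex.I).im = (k:ℝ) := by simp
    rw [him] at this
    field_simp at this
    linarith [this]
  have harg : ∀ θ : ℝ, (2*π*Complex.I *
        ((m:ℂ) * ((w1 + r*Real.cos θ : ℝ) : ℂ) + (k:ℂ) * ((w2 + r*Real.sin θ : ℝ) : ℂ)))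
      = 2*π*Complex.I * ((m:ℂ)*(w1:ℂ) + (k:ℂ)*(w2:ℂ)) + (3*Real.cos (θ - φ) : ℝ) * Complex.I := by
    intro θ
    have h1 : ((m:ℂ)) = ((sE * Real.cos φ : ℝ) : ℂ) := by
      rw [← hcos]; push_cast; ring
    have h2 : ((k:ℂ)) = ((sE * Real.sin φ : ℝ) : ℂ) := by
      rw [← hsin]; push_cast; ring
    have h3 : ((2*π*(r*sE) : ℝ) : ℂ) = 3 := by exact_mod_cast hrsE
    rw [h1, h2, Real.cos_sub]
    push_cast at h3 ⊢
    linear_combination (Complex.I * (Complex.cos θ * Complex.cos φ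
      + Complex.sin θ * Complex.sin φ)) * h3
  have hsplit : ∀ θ : ℝ, Complex.exp (2*π*Complex.I *
        ((m:ℂ) * ((w1 + r*Real.cos θ : ℝ) : ℂ) + (k:ℂ) * ((w2 + r*Real.sin θ : ℝ) : ℂ)))
      = Complex.exp (2*π*Complex.I * ((m:ℂ)*(w1:ℂ) + (k:ℂ)*(w2:ℂ)))
          * Complex.exp ((3*Real.cos (θ - φ) : ℝ) * Complex.I) := by
    intro θ
    rw [harg θ, Complex.exp_add]
  simp_rw [hsplit]
  rw [intervalIntegral.integral_const_mul, exp_cos_shift]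

end NodalDensityAux

open NodalDensityAux Real intervalIntegral in
set_option maxHeartbeats 2000000 in
/-- Density of the nodal set: there is an absolute constant `c > 0` such that every toral
eigenfunction of frequency `E ≥ 1` vanishes somewhere in every ball of radius `c/√E`. -/
theorem nodal_set_density :
    ∃ c : ℝ, 0 < c ∧
      ∀ E : ℕ, 1 ≤ E →
        ∀ f : EuclideanSpace ℝ (Fin 2) → ℝ, IsToralEigenfunction E f →
          ∀ z : EuclideanSpace ℝ (Fin 2),
            ∃ x ∈ ball z (c / Real.sqrt E), f x = 0 := by
  refine ⟨1, one_pos, ?_⟩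
  intro E hE f hf z
  obtain ⟨a, _hsymm, _hne, hrep⟩ := hf
  have hEpos : (0:ℝ) < E := by exact_mod_cast hE
  have hsE : (0:ℝ) < Real.sqrt E := Real.sqrt_pos.2 hEpos
  have hπ := Real.pi_pos
  set r : ℝ := 3/(2*π*Real.sqrt E) with hrdef
  have hrpos : 0 < r := by rw [hrdef]; positivity
  have hrsE : 2*π*(r*Real.sqrt E) = 3 := by
    rw [hrdef]
    field_simp
  have hrlt : r < 1/Real.sqrt E := by
    rw [hrdef, div_lt_div_iff₀ (by positivity) hsE]
    nlinarith [Real.pi_gt_three]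
  set Q : ℝ → ℝ → EuclideanSpace ℝ (Fin 2) := fun θ t =>
    (WithLp.equiv 2 (Fin 2 → ℝ)).symm ![z 0 + t*(r*Real.cos θ), z 1 + t*(r*Real.sin θ)] with hQdef
  have hQ0 : ∀ θ t : ℝ, Q θ t 0 = z 0 + t*(r*Real.cos θ) := by
    intro θ t
    simp [hQdef, WithLp.equiv_symm_apply, PiLp.toLp_apply]
  have hQ1 : ∀ θ t : ℝ, Q θ t 1 = z 1 + t*(r*Real.sin θ) := by
    intro θ t
    simp [hQdef, WithLp.equiv_symm_apply, PiLp.toLp_apply]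
  have hdist : ∀ θ t : ℝ, 0 ≤ t → t ≤ 1 → Q θ t ∈ ball z ((1:ℝ)/Real.sqrt E) := by
    intro θ t ht0 ht1
    rw [mem_ball, EuclideanSpace.dist_eq, Fin.sum_univ_two, hQ0, hQ1]
    have e1 : dist (z 0 + t*(r*Real.cos θ)) (z 0) = |t*(r*Real.cos θ)| := by
      rw [Real.dist_eq]; congr 1; ring
    have e2 : dist (z 1 + t*(r*Real.sin θ)) (z 1) = |t*(r*Real.sin θ)| := by
      rw [Real.dist_eq]; congr 1; ring
    rw [e1, e2]
    have e3 : |t*(r*Real.cos θ)|^2 + |t*(r*Real.sin θ)|^2 = (t*r)^2 := by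
      rw [sq_abs, sq_abs]
      have := Real.sin_sq_add_cos_sq θ
      nlinarith [this]
    rw [e3, Real.sqrt_sq (by positivity)]
    calc t * r ≤ 1 * r := by nlinarith
      _ = r := one_mul r
      _ < 1/Real.sqrt E := hrlt
  have hfq : ∀ θ t : ℝ, (f (Q θ t) : ℂ) = ∑ ξ ∈ latticeE E, a ξ *
      Complex.exp (2*π*Complex.I*((ξ.1:ℂ) * ((z 0 + t*(r*Real.cos θ) : ℝ):ℂ)
        + (ξ.2:ℂ) * ((z 1 + t*(r*Real.sin θ) : ℝ):ℂ))) := by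
    intro θ t
    rw [hrep (Q θ t)]
    simp_rw [hQ0, hQ1]
  set g : ℝ → ℝ := fun θ => f (Q θ 1) with hgdef
  have hgc : ∀ θ : ℝ, (g θ : ℂ) = ∑ ξ ∈ latticeE E, a ξ *
      Complex.exp (2*π*Complex.I*((ξ.1:ℂ) * ((z 0 + r*Real.cos θ : ℝ):ℂ)
        + (ξ.2:ℂ) * ((z 1 + r*Real.sin θ : ℝ):ℂ))) := by
    intro θ
    have := hfq θ 1
    simpa using this
  set K : ℝ := ∫ θ in (0:ℝ)..(2*π), Real.cos (3*Real.cos θ) with hKdef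
  set L : ℝ := ∫ θ in (0:ℝ)..(2*π), Real.sin (3*Real.cos θ) with hLdef
  set Cval : ℂ := ∫ θ in (0:ℝ)..(2*π), Complex.exp ((3*Real.cos θ : ℝ) * Complex.I) with hCdef
  have hIg : ((∫ θ in (0:ℝ)..(2*π), g θ : ℝ) : ℂ) = (f z : ℂ) * Cval := by
    rw [← intervalIntegral.integral_ofReal]
    calc (∫ θ in (0:ℝ)..(2*π), ((g θ : ℝ) : ℂ))
        = ∫ θ in (0:ℝ)..(2*π), ∑ ξ ∈ latticeE E, a ξ *
            Complex.exp (2*π*Complex.I*((ξ.1:ℂ) * ((z 0 + r*Real.cos θ : ℝ):ℂ)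
              + (ξ.2:ℂ) * ((z 1 + r*Real.sin θ : ℝ):ℂ))) := by
          simp_rw [hgc]
      _ = ∑ ξ ∈ latticeE E, ∫ θ in (0:ℝ)..(2*π), a ξ *
            Complex.exp (2*π*Complex.I*((ξ.1:ℂ) * ((z 0 + r*Real.cos θ : ℝ):ℂ)
              + (ξ.2:ℂ) * ((z 1 + r*Real.sin θ : ℝ):ℂ))) := by
          apply intervalIntegral.integral_finset_sum
          intro ξ _
          exact (Continuous.intervalIntegrable (by fun_prop) _ _)
      _ = ∑ ξ ∈ latticeE E, a ξ *
            (Complex.exp (2*π*Complex.I * ((ξ.1:ℂ)*((z 0 : ℝ):ℂ) + (ξ.2:ℂ)*((z 1 : ℝ):ℂ))) * Cval) := by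
          apply Finset.sum_congr rfl
          intro ξ hξ
          have hmem : ξ.1^2 + ξ.2^2 = (E:ℤ) := (Finset.mem_filter.1 hξ).2
          rw [intervalIntegral.integral_const_mul,
            key_integral E hE ξ.1 ξ.2 hmem r (z 0) (z 1) hrsE, hCdef]
      _ = (∑ ξ ∈ latticeE E, a ξ *
            Complex.exp (2*π*Complex.I * ((ξ.1:ℂ)*((z 0 : ℝ):ℂ) + (ξ.2:ℂ)*((z 1 : ℝ):ℂ)))) * Cval := by
          rw [Finset.sum_mul]
          apply Finset.sum_congr rfl
          intro ξ _
          ring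
      _ = (f z : ℂ) * Cval := by rw [hrep z]
  have hCval : Cval = (K:ℂ) + (L:ℂ)*Complex.I := by
    rw [hCdef]
    have hsplit : ∀ θ : ℝ, Complex.exp ((3*Real.cos θ : ℝ) * Complex.I)
        = ((Real.cos (3*Real.cos θ) : ℝ):ℂ) + ((Real.sin (3*Real.cos θ) : ℝ):ℂ)*Complex.I := by
      intro θ
      rw [Complex.exp_mul_I, ← Complex.ofReal_cos, ← Complex.ofReal_sin]
    simp_rw [hsplit]
    rw [intervalIntegral.integral_add (Continuous.intervalIntegrable (by fun_prop) _ _)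
        (Continuous.intervalIntegrable (by fun_prop) _ _),
      intervalIntegral.integral_mul_const, intervalIntegral.integral_ofReal,
      intervalIntegral.integral_ofReal]
  have hIgval : (∫ θ in (0:ℝ)..(2*π), g θ) = f z * K := by
    have h2 : ((∫ θ in (0:ℝ)..(2*π), g θ : ℝ):ℂ)
        = ((f z * K : ℝ):ℂ) + ((f z * L : ℝ):ℂ)*Complex.I := by
      rw [hIg, hCval]
      push_cast
      ring
    have := congrArg Complex.re h2
    simpa using this
  rcases eq_or_ne (f z) 0 with hz | hz
  · exact ⟨z, mem_ball_self (by positivity), hz⟩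
  · have hK : K < 0 := by rw [hKdef]; exact Kneg
    have hfz2 : 0 < (f z)^2 := by positivity
    have hθ0 : ∃ θ : ℝ, f z * g θ < 0 := by
      by_contra hcon
      push_neg at hcon
      have h1 : 0 ≤ ∫ θ in (0:ℝ)..(2*π), f z * g θ :=
        intervalIntegral.integral_nonneg (by positivity) (fun u _ => hcon u)
      rw [intervalIntegral.integral_const_mul, hIgval] at h1
      nlinarith
    obtain ⟨θ0, hθ0⟩ := hθ0
    set G : ℝ → ℝ := fun t => f (Q θ0 t) with hGdef
    have hGrep : G = fun t => (∑ ξ ∈ latticeE E, a ξ *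
        Complex.exp (2*π*Complex.I*((ξ.1:ℂ) * ((z 0 + t*(r*Real.cos θ0) : ℝ):ℂ)
          + (ξ.2:ℂ) * ((z 1 + t*(r*Real.sin θ0) : ℝ):ℂ)))).re := by
      funext t
      have h := hfq θ0 t
      calc G t = ((G t : ℝ):ℂ).re := (Complex.ofReal_re _).symm
        _ = _ := by rw [hGdef]; rw [h]
    have hGcont : Continuous G := by
      rw [hGrep]
      apply Complex.continuous_re.comp
      fun_prop
    have hG0 : G 0 = f z := by
      have h0 : ((G 0 : ℝ):ℂ) = ((f z : ℝ):ℂ) := by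
        rw [hGdef]
        rw [hfq θ0 0, hrep z]
        norm_num
      exact_mod_cast h0
    have hG1 : G 1 = g θ0 := rfl
    have hmem0 : (0:ℝ) ∈ Set.uIcc (G 0) (G 1) := by
      rw [hG0, hG1]
      rcases lt_or_ge (f z) 0 with h | h
      · exact Set.mem_uIcc.2 (Or.inl ⟨h.le, by nlinarith⟩)
      · exact Set.mem_uIcc.2 (Or.inr ⟨by nlinarith, by nlinarith⟩)
    obtain ⟨t, ht, hGt⟩ := intermediate_value_uIcc hGcont.continuousOn hmem0
    rw [Set.uIcc_of_le zero_le_one] at ht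
    refine ⟨Q θ0 t, ?_, hGt⟩
    have := hdist θ0 t ht.1 ht.2
    simpa using this
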